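/- In a level-1 phylogenetic network N on a finite set X, every nonempty subset Y of X has exactly one lowest common ancestor. -/

import Mathlib

open Relation

/-- A rooted phylogenetic network on a finite taxa set `X` with vertex type `V`:
a finite simple acyclic digraph with a unique root (indegree 0, reaching every
vertex), no vertices with indegree 1 and outdegree 1, whose leaves (outdegree-0
vertices) are bijectively labelled by `X`. -/
structure PhyloNetwork (V X : Type) [Fintype V] [Fintype X] where
  /-- arc relation of the digraph -/
  Adj : V → V → Prop
  /-- acyclicity: no directed cycle -/
  acyclic : ∀ v, ¬ Relation.TransGen Adj v v
  /-- the root -/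
  root : V
  /-- the root has indegree 0 -/
  root_no_parent : ∀ u, ¬ Adj u root
  /-- every vertex is reachable from the root by a directed path -/
  root_reaches : ∀ v, Relation.ReflTransGen Adj root v
  /-- no vertex has indegree 1 and outdegree 1 -/
  no_degenerate : ∀ v, ¬ ({u | Adj u v}.ncard = 1 ∧ {u | Adj v u}.ncard = 1)
  /-- the leaves are bijectively labelled by the taxa in `X` -/
  label : X ≃ {v : V // ∀ u, ¬ Adj v u}

namespace PhyloNetwork

variable {V X : Type} [Fintype V] [Fintype X] (N : PhyloNetwork V X)

/-- a leaf is a vertex of outdegree 0 -/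
def IsLeaf (v : V) : Prop := ∀ u, ¬ N.Adj v u

/-- the leaf labelled by taxon `x` -/
def leaf (x : X) : V := (N.label x).val

/-- `u` is below `v` (equivalently, `v` is above `u`): there is a directed
path from `v` to `u` -/
def below (u v : V) : Prop := Relation.ReflTransGen N.Adj v u

/-- `u` is strictly below `v` -/
def strictlyBelow (u v : V) : Prop := N.below u v ∧ u ≠ v

/-- the cluster of a vertex: the set of taxa labelling the leaves below it -/
def cluster (v : V) : Set X := {x | N.below (N.leaf x) v}

/-- a common ancestor of a set `Y` of taxa -/
def CommonAncestor (Y : Set X) (v : V) : Prop := Y ⊆ N.cluster v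

/-- a lowest common ancestor (LCA) of `Y`: a common ancestor of `Y` such that
no other common ancestor of `Y` is strictly below it -/
def IsLCA (Y : Set X) (v : V) : Prop :=
  N.CommonAncestor Y v ∧ ∀ u, N.CommonAncestor Y u → ¬ N.strictlyBelow u v

/-- `p` is a directed path from `u` to `v`, recorded as its list of vertices -/
def IsDipath (p : List V) (u v : V) : Prop :=
  p ≠ [] ∧ p.head? = some u ∧ p.getLast? = some v ∧ p.Chain' N.Adj ∧ p.Nodup

/-- the arc `(a, b)` is traversed by the path `p` -/
def ArcIn (p : List V) (a b : V) : Prop := (a, b) ∈ p.zip p.tail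

/-- a stable ancestor of `Y`: a vertex contained in every directed path from
the root to some taxon in `Y` -/
def StableAncestor (Y : Set X) (v : V) : Prop :=
  ∀ x ∈ Y, ∀ p : List V, N.IsDipath p N.root (N.leaf x) → v ∈ p

/-- the lowest stable ancestor (LSA) of `Y`: the stable ancestor of `Y`
that is below every stable ancestor of `Y` -/
def IsLSA (Y : Set X) (w : V) : Prop :=
  N.StableAncestor Y w ∧ ∀ v, N.StableAncestor Y v → N.below w v

/-- the underlying undirected graph of the network -/
def underlying : SimpleGraph V := SimpleGraph.fromRel N.Adj

/-- indegree of a vertex -/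
noncomputable def inDeg (v : V) : ℕ := {u | N.Adj u v}.ncard

/-- outdegree of a vertex -/
noncomputable def outDeg (v : V) : ℕ := {u | N.Adj v u}.ncard

/-- binary network: every non-leaf vertex has indegree at most 2 and
outdegree at most 2, and every vertex of indegree 2 has outdegree 1 -/
def Binary : Prop :=
  (∀ v, ¬ N.IsLeaf v → N.inDeg v ≤ 2 ∧ N.outDeg v ≤ 2) ∧
  (∀ v, N.inDeg v = 2 → N.outDeg v = 1)

/-- level-1 network: binary, and any two cycles of the underlying undirected
graph are vertex-disjoint (i.e. any two cycles sharing a vertex have the same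
vertex set) -/
def Level1 : Prop :=
  N.Binary ∧ ∀ (u v : V) (c₁ : N.underlying.Walk u u) (c₂ : N.underlying.Walk v v),
    c₁.IsCycle → c₂.IsCycle → ∀ w, w ∈ c₁.support → w ∈ c₂.support →
      ∀ z, (z ∈ c₁.support ↔ z ∈ c₂.support)

/-- a cut arc: an arc whose removal disconnects the underlying undirected graph -/
def CutArc (a b : V) : Prop :=
  N.Adj a b ∧ ¬ (SimpleGraph.fromRel (fun u v => N.Adj u v ∧ ¬ (u = a ∧ v = b))).Connected

/-- a splitting ancestor of distinct taxa `x` and `y`: a (non-leaf) vertex such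
that precisely one taxon from `{x, y}` is below both of its children, while the
other taxon is below exactly one of its two children -/
def SplittingAncestor (x y : X) (v : V) : Prop :=
  ∃ c₁ c₂, c₁ ≠ c₂ ∧ N.Adj v c₁ ∧ N.Adj v c₂ ∧
    ((N.below (N.leaf x) c₁ ∧ N.below (N.leaf x) c₂ ∧
        Xor' (N.below (N.leaf y) c₁) (N.below (N.leaf y) c₂)) ∨
     (N.below (N.leaf y) c₁ ∧ N.below (N.leaf y) c₂ ∧
        Xor' (N.below (N.leaf x) c₁) (N.below (N.leaf x) c₂)))

/-- saturated level-1 network: each non-leaf vertex is contained in a cycle of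
size three of the underlying undirected graph -/
def Saturated : Prop :=
  ∀ v, ¬ N.IsLeaf v → ∃ c : N.underlying.Walk v v, c.IsCycle ∧ c.length = 3

/-- the multiset of clusters induced by the vertices of the network -/
noncomputable def clusterMultiset : Multiset (Set X) :=
  (Finset.univ : Finset V).val.map N.cluster

/-- the Robinson–Foulds distance: the size of the symmetric difference of the
multisets of clusters of the two networks -/
noncomputable def rfDist {V V' X : Type} [Fintype V] [Fintype V'] [Fintype X]
    (N : PhyloNetwork V X) (N' : PhyloNetwork V' X) : ℕ :=
  letI : DecidableEq (Set X) := Classical.decEq _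
  ((N.clusterMultiset - N'.clusterMultiset) +
    (N'.clusterMultiset - N.clusterMultiset)).card

end PhyloNetwork

section Aux

open Relation SimpleGraph

namespace PhyloNetwork

variable {V X : Type} [Fintype V] [Fintype X] (N : PhyloNetwork V X)

lemma below_refl (a : V) : N.below a a := ReflTransGen.refl

lemma below_trans {a b c : V} (h1 : N.below a b) (h2 : N.below b c) : N.below a c :=
  ReflTransGen.trans h2 h1

lemma below_antisymm {a b : V} (h1 : N.below a b) (h2 : N.below b a) : a = b := by
  rcases ReflTransGen.cases_head h1 with h | ⟨c, hbc, hca⟩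
  · exact h.symm
  · exact absurd (Relation.TransGen.head' hbc (hca.trans h2)) (N.acyclic b)

lemma exists_min (S : Set V) (hS : S.Nonempty) :
    ∃ m ∈ S, ∀ w ∈ S, N.below w m → w = m := by
  obtain ⟨m, hm, hmin⟩ := Set.Finite.exists_minimalFor
    (fun v => {w : V | Relation.ReflTransGen N.Adj v w}) S (Set.toFinite S) hS
  refine ⟨m, hm, fun w hw hwm => ?_⟩
  have hwm' : Relation.ReflTransGen N.Adj m w := hwm
  have hsub : {z : V | Relation.ReflTransGen N.Adj w z} ≤
      {z : V | Relation.ReflTransGen N.Adj m z} :=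
    fun z hz => Relation.ReflTransGen.trans hwm' hz
  have heq := hmin hw hsub
  have hmw : N.below m w := by
    have h2 : m ∈ {z : V | Relation.ReflTransGen N.Adj w z} := by
      exact heq Relation.ReflTransGen.refl
    exact h2
  exact N.below_antisymm hwm hmw

lemma exists_max (S : Set V) (hS : S.Nonempty) :
    ∃ m ∈ S, ∀ w ∈ S, N.below m w → w = m := by
  obtain ⟨m, hm, hmin⟩ := Set.Finite.exists_minimalFor
    (fun v => {w : V | Relation.ReflTransGen N.Adj w v}) S (Set.toFinite S) hS
  refine ⟨m, hm, fun w hw hmw => ?_⟩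
  have hmw' : Relation.ReflTransGen N.Adj w m := hmw
  have hsub : {z : V | Relation.ReflTransGen N.Adj z w} ≤
      {z : V | Relation.ReflTransGen N.Adj z m} :=
    fun z hz => Relation.ReflTransGen.trans hz hmw'
  have heq := hmin hw hsub
  have hwm : N.below w m := by
    have h2 : m ∈ {z : V | Relation.ReflTransGen N.Adj z w} := by
      exact heq Relation.ReflTransGen.refl
    exact h2
  exact N.below_antisymm hwm hmw

lemma exists_path {a b : V} (h : N.below b a) :
    ∃ p : N.underlying.Walk a b, p.IsPath ∧
      ∀ w ∈ p.support, N.below w a ∧ N.below b w := by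
  induction h with
  | refl =>
    exact ⟨Walk.nil, by simp [Walk.isPath_def],
      by intro w hw; simp at hw; subst hw; exact ⟨ReflTransGen.refl, ReflTransGen.refl⟩⟩
  | @tail c b hac hcb ih =>
    obtain ⟨p, hp, hbet⟩ := ih
    have hcb' : c ≠ b := by
      rintro rfl
      exact absurd (Relation.TransGen.single hcb) (N.acyclic c)
    have hadj : N.underlying.Adj c b := by
      rw [PhyloNetwork.underlying, SimpleGraph.fromRel_adj]
      exact ⟨hcb', Or.inl hcb⟩
    have hbns : b ∉ p.support := by
      intro hb
      exact absurd (Relation.TransGen.head' hcb (hbet b hb).2) (N.acyclic c)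
    refine ⟨p.concat hadj, ?_, ?_⟩
    · rw [Walk.isPath_def, Walk.support_concat]
      simp only [List.concat_eq_append, List.nodup_append, List.nodup_cons, List.nodup_nil,
        List.disjoint_singleton]
      exact ⟨hp.support_nodup, by simp, by simpa using fun a (ha : a ∈ p.support) (hab : a = b) => hbns (hab ▸ ha)⟩
    · intro w hw
      rw [Walk.support_concat, List.mem_append] at hw
      rcases hw with hw | hw
      · obtain ⟨h1, h2⟩ := hbet w hw
        exact ⟨h1, ReflTransGen.tail h2 hcb⟩
      · simp at hw; subst hw
        exact ⟨ReflTransGen.tail hac hcb, ReflTransGen.refl⟩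

lemma buildCycle {u v r d : V}
    (huv : ¬ N.below u v) (hvu : ¬ N.below v u)
    (hru : N.below u r) (hrv : N.below v r)
    (hrmin : ∀ w, N.below u w → N.below v w → N.below w r → w = r)
    (hdu : N.below d u) (hdv : N.below d v)
    (hdmax : ∀ w, N.below w u → N.below w v → N.below d w → w = d) :
    ∃ C : N.underlying.Walk r r, C.IsCycle ∧ u ∈ C.support ∧ d ∈ C.support ∧
      ∀ z ∈ C.support,
        (N.below z u ∧ N.below d z) ∨ (N.below z v ∧ N.below d z) ∨
        (N.below u z ∧ N.below z r) ∨ (N.below v z ∧ N.below z r) := by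
  have hrneu : r ≠ u := by rintro rfl; exact hvu hrv
  have hrnev : r ≠ v := by rintro rfl; exact huv hru
  have hdneu : d ≠ u := by rintro rfl; exact huv hdv
  have hdnev : d ≠ v := by rintro rfl; exact hvu hdu
  obtain ⟨p1, hp1, hp1b⟩ := N.exists_path hru
  obtain ⟨q1, hq1, hq1b⟩ := N.exists_path hdu
  obtain ⟨q2, hq2, hq2b⟩ := N.exists_path hdv
  obtain ⟨p2, hp2, hp2b⟩ := N.exists_path hrv
  cases p1 with
  | nil => exact absurd rfl hrneu
  | @cons _ a _ hadj p1' =>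
    rw [Walk.cons_isPath_iff] at hp1
    obtain ⟨hp1', hrns⟩ := hp1
    have hp1b' : ∀ w ∈ p1'.support, N.below w r ∧ N.below u w := by
      intro w hw
      exact hp1b w (by rw [Walk.support_cons]; exact List.mem_cons_of_mem _ hw)
    set rest := p1'.append (q1.append (q2.reverse.append p2.reverse)) with hrest_def
    have hrs : rest.support = p1'.support ++
        (q1.support.tail ++ (q2.reverse.support.tail ++ p2.reverse.support.tail)) := by
      rw [hrest_def, Walk.support_append, Walk.tail_support_append, Walk.tail_support_append]
    -- membership characterizations
    have hB1 : ∀ z ∈ p1'.support, (N.below u z ∧ N.below z r) ∧ z ≠ r := by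
      intro z hz
      obtain ⟨h1, h2⟩ := hp1b' z hz
      exact ⟨⟨h2, h1⟩, by rintro rfl; exact hrns hz⟩
    have hB2 : ∀ z ∈ q1.support.tail, (N.below z u ∧ N.below d z) ∧ z ≠ u := by
      intro z hz
      obtain ⟨h1, h2⟩ := hq1b z (List.mem_of_mem_tail hz)
      refine ⟨⟨h1, h2⟩, ?_⟩
      rintro rfl
      have := hq1.support_nodup
      rw [Walk.support_eq_cons] at this
      exact (List.nodup_cons.mp this).1 hz
    have hB3 : ∀ z ∈ q2.reverse.support.tail, (N.below z v ∧ N.below d z) ∧ z ≠ d := by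
      intro z hz
      have hz' : z ∈ q2.support := by
        have := List.mem_of_mem_tail hz
        rwa [Walk.support_reverse, List.mem_reverse] at this
      obtain ⟨h1, h2⟩ := hq2b z hz'
      refine ⟨⟨h1, h2⟩, ?_⟩
      rintro rfl
      have := hq2.reverse.support_nodup
      rw [Walk.support_eq_cons] at this
      exact (List.nodup_cons.mp this).1 hz
    have hB4 : ∀ z ∈ p2.reverse.support.tail, (N.below v z ∧ N.below z r) ∧ z ≠ v := by
      intro z hz
      have hz' : z ∈ p2.support := by
        have := List.mem_of_mem_tail hz
        rwa [Walk.support_reverse, List.mem_reverse] at this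
      obtain ⟨h1, h2⟩ := hp2b z hz'
      refine ⟨⟨h2, h1⟩, ?_⟩
      rintro rfl
      have := hp2.reverse.support_nodup
      rw [Walk.support_eq_cons] at this
      exact (List.nodup_cons.mp this).1 hz
    -- nodup of blocks
    have n1 : p1'.support.Nodup := hp1'.support_nodup
    have n2 : q1.support.tail.Nodup := hq1.support_nodup.sublist (List.tail_sublist _)
    have n3 : q2.reverse.support.tail.Nodup :=
      hq2.reverse.support_nodup.sublist (List.tail_sublist _)
    have n4 : p2.reverse.support.tail.Nodup :=
      hp2.reverse.support_nodup.sublist (List.tail_sublist _)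
    -- pairwise disjointness
    have d12 : p1'.support.Disjoint q1.support.tail := by
      intro z hz1 hz2
      obtain ⟨⟨hzu, _⟩, _⟩ := hB1 z hz1
      obtain ⟨⟨hzu', _⟩, hzne⟩ := hB2 z hz2
      exact hzne (N.below_antisymm hzu' hzu)
    have d13 : p1'.support.Disjoint q2.reverse.support.tail := by
      intro z hz1 hz2
      obtain ⟨⟨hzu, _⟩, _⟩ := hB1 z hz1
      obtain ⟨⟨hzv, _⟩, _⟩ := hB3 z hz2
      exact huv (N.below_trans hzu hzv)
    have d14 : p1'.support.Disjoint p2.reverse.support.tail := by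
      intro z hz1 hz2
      obtain ⟨⟨hzu, hzr⟩, hzner⟩ := hB1 z hz1
      obtain ⟨⟨hzv, _⟩, _⟩ := hB4 z hz2
      exact hzner (hrmin z hzu hzv hzr)
    have d23 : q1.support.tail.Disjoint q2.reverse.support.tail := by
      intro z hz1 hz2
      obtain ⟨⟨hzu, hdz⟩, _⟩ := hB2 z hz1
      obtain ⟨⟨hzv, _⟩, hzned⟩ := hB3 z hz2
      exact hzned (hdmax z hzu hzv hdz)
    have d24 : q1.support.tail.Disjoint p2.reverse.support.tail := by
      intro z hz1 hz2
      obtain ⟨⟨hzu, _⟩, _⟩ := hB2 z hz1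
      obtain ⟨⟨hzv, _⟩, _⟩ := hB4 z hz2
      exact hvu (N.below_trans hzv hzu)
    have d34 : q2.reverse.support.tail.Disjoint p2.reverse.support.tail := by
      intro z hz1 hz2
      obtain ⟨⟨hzv, _⟩, _⟩ := hB3 z hz1
      obtain ⟨⟨hzv', _⟩, hznev⟩ := hB4 z hz2
      exact hznev (N.below_antisymm hzv hzv')
    have hrestpath : rest.IsPath := by
      rw [Walk.isPath_def, hrs, List.nodup_append, List.nodup_append, List.nodup_append]
      refine ⟨n1, ⟨n2, ⟨n3, n4, fun z h1 w h2 hzw => by subst hzw; exact d34 h1 h2⟩, ?_⟩, ?_⟩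
      · intro z h1 w h2 hzw
        subst hzw
        rcases List.mem_append.mp h2 with h2 | h2
        · exact d23 h1 h2
        · exact d24 h1 h2
      · intro z h1 w h2 hzw
        subst hzw
        rcases List.mem_append.mp h2 with h2 | h2
        · exact d12 h1 h2
        rcases List.mem_append.mp h2 with h2 | h2
        · exact d13 h1 h2
        · exact d14 h1 h2
    have hanep1 : a ∈ p1'.support := Walk.start_mem_support p1'
    have hedge : ¬ s(r, a) ∈ rest.edges := by
      intro he
      rw [hrest_def, Walk.edges_append, Walk.edges_append, Walk.edges_append,
        List.mem_append, List.mem_append, List.mem_append] at he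
      rcases he with he | he | he | he
      · exact hrns (Walk.fst_mem_support_of_mem_edges p1' he)
      · have hr : r ∈ q1.support := Walk.fst_mem_support_of_mem_edges q1 he
        exact hrneu (N.below_antisymm (hq1b r hr).1 hru)
      · have hr : r ∈ q2.reverse.support := Walk.fst_mem_support_of_mem_edges _ he
        rw [Walk.support_reverse, List.mem_reverse] at hr
        exact hrnev (N.below_antisymm (hq2b r hr).1 hrv)
      · have ha : a ∈ p2.reverse.support := Walk.snd_mem_support_of_mem_edges _ he
        rw [Walk.support_reverse, List.mem_reverse] at ha
        obtain ⟨har, hva⟩ := hp2b a ha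
        obtain ⟨⟨hua, har'⟩, hane⟩ := hB1 a hanep1
        exact hane (hrmin a hua hva har')
    have hcyc : (Walk.cons hadj rest).IsCycle :=
      (Walk.cons_isCycle_iff rest hadj).mpr ⟨hrestpath, hedge⟩
    refine ⟨Walk.cons hadj rest, hcyc, ?_, ?_, ?_⟩
    · rw [Walk.support_cons, hrs]
      exact List.mem_cons_of_mem _
        (List.mem_append_left _ (Walk.end_mem_support p1'))
    · rw [Walk.support_cons, hrs]
      have hd : d ∈ q1.support.tail := by
        have := Walk.end_mem_support q1
        rw [Walk.support_eq_cons] at this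
        rcases List.mem_cons.mp this with h | h
        · exact absurd h hdneu
        · exact h
      exact List.mem_cons_of_mem _
        (List.mem_append_right _ (List.mem_append_left _ hd))
    · intro z hz
      rw [Walk.support_cons, hrs] at hz
      rcases List.mem_cons.mp hz with rfl | hz
      · exact Or.inr (Or.inr (Or.inl ⟨hru, N.below_refl _⟩))
      rcases List.mem_append.mp hz with hz | hz
      · exact Or.inr (Or.inr (Or.inl (hB1 z hz).1))
      rcases List.mem_append.mp hz with hz | hz
      · exact Or.inl (hB2 z hz).1
      rcases List.mem_append.mp hz with hz | hz
      · exact Or.inr (Or.inl (hB3 z hz).1)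
      · exact Or.inr (Or.inr (Or.inr (hB4 z hz).1))

lemma lca_eq (hN : N.Level1) {Y : Set X} (hY : Y.Nonempty) {u v : V}
    (hu : N.IsLCA Y u) (hv : N.IsLCA Y v) : u = v := by
  by_contra hne
  have huv : ¬ N.below u v := fun h => hv.2 u hu.1 ⟨h, hne⟩
  have hvu : ¬ N.below v u := fun h => hu.2 v hv.1 ⟨h, Ne.symm hne⟩
  obtain ⟨x, hx⟩ := hY
  obtain ⟨r, ⟨hru, hrv⟩, hrmin'⟩ := N.exists_min {w | N.below u w ∧ N.below v w}
    ⟨N.root, N.root_reaches u, N.root_reaches v⟩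
  have hrmin : ∀ w, N.below u w → N.below v w → N.below w r → w = r :=
    fun w h1 h2 h3 => hrmin' w ⟨h1, h2⟩ h3
  obtain ⟨d, ⟨hdu, hdv, hxd⟩, hdmax'⟩ := N.exists_max
    {w | N.below w u ∧ N.below w v ∧ N.below (N.leaf x) w}
    ⟨N.leaf x, hu.1 hx, hv.1 hx, N.below_refl _⟩
  have hdmax : ∀ w, N.below w u → N.below w v → N.below d w → w = d :=
    fun w h1 h2 h3 => hdmax' w ⟨h1, h2, N.below_trans hxd h3⟩ h3
  -- claim : every taxon of Y is below d
  have hclaim : ∀ y ∈ Y, N.below (N.leaf y) d := by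
    intro y hy
    by_contra hnot
    obtain ⟨e, ⟨heu, hev, hye⟩, hemax'⟩ := N.exists_max
      {w | N.below w u ∧ N.below w v ∧ N.below (N.leaf y) w}
      ⟨N.leaf y, hu.1 hy, hv.1 hy, N.below_refl _⟩
    have hemax : ∀ w, N.below w u → N.below w v → N.below e w → w = e :=
      fun w h1 h2 h3 => hemax' w ⟨h1, h2, N.below_trans hye h3⟩ h3
    obtain ⟨C, hC, huC, _, hcovC⟩ := N.buildCycle huv hvu hru hrv hrmin hdu hdv hdmax
    obtain ⟨C', hC', huC', heC', _⟩ := N.buildCycle huv hvu hru hrv hrmin heu hev hemax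
    have hiff := hN.2 r r C C' hC hC' u huC huC'
    have heC : e ∈ C.support := (hiff e).mpr heC'
    have hned : e ≠ d := by rintro rfl; exact hnot hye
    rcases hcovC e heC with ⟨h1, h2⟩ | ⟨h1, h2⟩ | ⟨h1, h2⟩ | ⟨h1, h2⟩
    · exact hned (hdmax e h1 hev h2)
    · exact hned (hdmax e heu h1 h2)
    · exact huv (N.below_antisymm heu h1 ▸ hev)
    · exact hvu (N.below_antisymm hev h1 ▸ heu)
  have hdCA : N.CommonAncestor Y d := fun y hy => hclaim y hy
  have hdned : d ≠ u := by rintro rfl; exact huv hdv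
  exact hu.2 d hdCA ⟨hdu, hdned⟩

end PhyloNetwork

end Aux


/-- In a level-1 phylogenetic network `N` on a finite set `X`,
every nonempty subset `Y` of `X` has exactly one lowest common ancestor. -/
theorem lca_unique {V X : Type} [Fintype V] [Fintype X]
    (N : PhyloNetwork V X) (hN : N.Level1) (Y : Set X) (hY : Y.Nonempty) :
    ∃! v, N.IsLCA Y v := by
  obtain ⟨m, hmS, hmmin⟩ := N.exists_min {w | N.CommonAncestor Y w}
    ⟨N.root, fun x _ => N.root_reaches (N.leaf x)⟩
  have hm : N.IsLCA Y m := ⟨hmS, fun w hw hsb => hsb.2 (hmmin w hw hsb.1)⟩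
  exact ⟨m, hm, fun w hw => N.lca_eq hN hY hw hm⟩
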